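/- Suppose X_i is the spin at vertex i in an (α,β)-nondegenerate Ising model on n nodes and j is a neighbor of i (i.e. J_{ij} ≠ 0). Then for any fixing x_{≠i,j} ∈ {-1,1}^{n-2} of the spins other than i and j, | E[X_i | X_j = 1, X_{≠i,j} = x_{≠i,j}] − E[X_i | X_j = -1, X_{≠i,j} = x_{≠i,j}] | ≥ 2α(1 − tanh²(β)). -/

import Mathlib

open Finset
open scoped BigOperators Classical

noncomputable section

/-- The value of a spin: `true ↦ 1`, `false ↦ -1`. -/
def spin (b : Bool) : ℝ := if b then 1 else -1

/-- Boltzmann weight of a configuration of the Ising model `μ(J,h)`. -/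
def isingWeight (n : ℕ) (J : Fin n → Fin n → ℝ) (h : Fin n → ℝ) (x : Fin n → Bool) : ℝ :=
  Real.exp ((1 / 2) * (∑ a, ∑ b, J a b * spin (x a) * spin (x b)) + ∑ a, h a * spin (x a))

/-- Conditional expectation of `X_i` given `X_j = b` and `X_l = z_l` for all `l ≠ i, j`. -/
def condExpSpin (n : ℕ) (J : Fin n → Fin n → ℝ) (h : Fin n → ℝ) (i j : Fin n) (b : Bool)
    (z : Fin n → Bool) : ℝ :=
  (∑ x : Fin n → Bool,
      if x j = b ∧ ∀ l : Fin n, l ≠ i → l ≠ j → x l = z l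
      then spin (x i) * isingWeight n J h x else 0) /
  (∑ x : Fin n → Bool,
      if x j = b ∧ ∀ l : Fin n, l ≠ i → l ≠ j → x l = z l
      then isingWeight n J h x else 0)

lemma abs_spin (b : Bool) : |spin b| = 1 := by cases b <;> simp [spin]

lemma one_sub_tanh_sq (x : ℝ) : 1 - Real.tanh x ^ 2 = 1 / Real.cosh x ^ 2 := by
  have hc : (0:ℝ) < Real.cosh x := Real.cosh_pos x
  have hs := Real.cosh_sq_sub_sinh_sq x
  rw [Real.tanh_eq_sinh_div_cosh, div_pow]
  field_simp
  exact hs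

lemma tanh_diff_lower {β u v : ℝ} (hu : |u| ≤ β) (hv : |v| ≤ β) (huv : u ≤ v) :
    (v - u) * (1 - Real.tanh β ^ 2) ≤ Real.tanh v - Real.tanh u := by
  have hcu : 0 < Real.cosh u := Real.cosh_pos u
  have hcv : 0 < Real.cosh v := Real.cosh_pos v
  have hcb : 0 < Real.cosh β := Real.cosh_pos β
  have h1 : Real.tanh v - Real.tanh u = Real.sinh (v - u) / (Real.cosh u * Real.cosh v) := by
    rw [Real.sinh_sub, Real.tanh_eq_sinh_div_cosh, Real.tanh_eq_sinh_div_cosh,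
      div_sub_div _ _ hcv.ne' hcu.ne']
    ring
  have h3 : v - u ≤ Real.sinh (v - u) := by
    rcases eq_or_lt_of_le huv with hEq | hlt
    · simp [hEq]
    · exact (Real.self_lt_sinh_iff.2 (by linarith)).le
  have hβ0 : 0 ≤ β := le_trans (abs_nonneg u) hu
  have h4 : Real.cosh u ≤ Real.cosh β := Real.cosh_le_cosh.2 (by rwa [abs_of_nonneg hβ0])
  have h5 : Real.cosh v ≤ Real.cosh β := Real.cosh_le_cosh.2 (by rwa [abs_of_nonneg hβ0])
  rw [h1, one_sub_tanh_sq, mul_one_div]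
  exact div_le_div₀ (by linarith) h3 (by positivity) (by nlinarith)

lemma exp_ratio_tanh (C M : ℝ) :
    (Real.exp (C + M) - Real.exp (C - M)) / (Real.exp (C + M) + Real.exp (C - M))
      = Real.tanh M := by
  have hm : (0:ℝ) < Real.exp M + Real.exp (-M) := by positivity
  rw [Real.tanh_eq_sinh_div_cosh, Real.sinh_eq, Real.cosh_eq]
  rw [show C - M = C + (-M) by ring, Real.exp_add, Real.exp_add]
  rw [show ((Real.exp M - Real.exp (-M)) / 2) / ((Real.exp M + Real.exp (-M)) / 2)
      = (Real.exp M - Real.exp (-M)) / (Real.exp M + Real.exp (-M)) by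
    field_simp]
  rw [show Real.exp C * Real.exp M - Real.exp C * Real.exp (-M)
      = Real.exp C * (Real.exp M - Real.exp (-M)) by ring,
    show Real.exp C * Real.exp M + Real.exp C * Real.exp (-M)
      = Real.exp C * (Real.exp M + Real.exp (-M)) by ring,
    mul_div_mul_left _ _ (Real.exp_ne_zero C)]

lemma exponent_update (n : ℕ) (J : Fin n → Fin n → ℝ) (h : Fin n → ℝ)
    (hsymm : ∀ a b, J a b = J b a) (hdiag : ∀ a, J a a = 0)
    (i : Fin n) (t : Fin n → ℝ) (σ : ℝ) :
    (1 / 2) * (∑ a, ∑ c, J a c * Function.update t i σ a * Function.update t i σ c)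
        + ∑ a, h a * Function.update t i σ a
      = ((1 / 2) * (∑ a ∈ univ.erase i, ∑ c ∈ univ.erase i, J a c * t a * t c)
          + ∑ a ∈ univ.erase i, h a * t a)
        + σ * ((∑ c, J i c * t c) + h i) := by
  classical
  have split : ∀ f : Fin n → ℝ, (∑ a, f a) = (∑ a ∈ univ.erase i, f a) + f i :=
    fun f => (Finset.sum_erase_add univ f (mem_univ i)).symm
  set u := Function.update t i σ with hu_def
  have hu_i : u i = σ := Function.update_self i σ t
  have hu : ∀ a ∈ univ.erase i, u a = t a := fun a ha =>
    Function.update_of_ne (Finset.ne_of_mem_erase ha) σ t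
  have hA : ∀ a ∈ univ.erase i, (∑ c, J a c * u a * u c)
      = (∑ c ∈ univ.erase i, J a c * t a * t c) + σ * (J i a * t a) := by
    intro a ha
    rw [split (fun c => J a c * u a * u c)]
    congr 1
    · exact Finset.sum_congr rfl fun c hc => by rw [hu a ha, hu c hc]
    · rw [hu a ha, hu_i, hsymm a i]; ring
  have hB : (∑ c, J i c * u i * u c)
      = σ * (∑ c ∈ univ.erase i, J i c * t c) := by
    rw [split (fun c => J i c * u i * u c)]
    have : ∀ c ∈ univ.erase i, J i c * u i * u c = σ * (J i c * t c) := fun c hc => by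
      rw [hu c hc, hu_i]; ring
    rw [Finset.sum_congr rfl this, ← Finset.mul_sum, hu_i, hdiag i]
    ring
  have hsumJ : (∑ c, J i c * t c) = ∑ c ∈ univ.erase i, J i c * t c := by
    rw [split (fun c => J i c * t c), hdiag i]; ring
  rw [split (fun a => ∑ c, J a c * u a * u c), Finset.sum_congr rfl hA, hB,
      split (fun a => h a * u a), Finset.sum_congr rfl (fun a ha => by rw [hu a ha] :
        ∀ a ∈ univ.erase i, h a * u a = h a * t a), hu_i,
      Finset.sum_add_distrib, ← Finset.mul_sum, hsumJ]
  ring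

lemma condExpSpin_eq_tanh (n : ℕ) (J : Fin n → Fin n → ℝ) (h : Fin n → ℝ)
    (hsymm : ∀ a b, J a b = J b a) (hdiag : ∀ a, J a a = 0)
    (i j : Fin n) (hij : i ≠ j) (b : Bool) (z : Fin n → Bool) :
    condExpSpin n J h i j b z
      = Real.tanh ((∑ c, J i c * spin (if c = j then b else z c)) + h i) := by
  classical
  set t : Fin n → ℝ := fun c => spin (if c = j then b else z c) with ht
  set y : Bool → Fin n → Bool := fun bi l => if l = i then bi else if l = j then b else z l
    with hy
  have hspin : ∀ bi a, spin (y bi a) = Function.update t i (spin bi) a := by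
    intro bi a
    by_cases hai : a = i
    · subst hai; simp [hy, Function.update_self]
    · simp [hy, hai, Function.update_of_ne hai, ht, apply_ite spin]
  have hyj : ∀ bi, y bi j = b := by
    intro bi; simp [hy, (show j ≠ i from Ne.symm hij)]
  have hmem : ∀ x : Fin n → Bool,
      (x j = b ∧ ∀ l, l ≠ i → l ≠ j → x l = z l) ↔ (x = y true ∨ x = y false) := by
    intro x
    constructor
    · rintro ⟨hxj, hrest⟩
      have hx : x = y (x i) := by
        funext l
        by_cases hli : l = i
        · subst hli; simp [hy]
        · by_cases hlj : l = j
          · subst hlj; simp [hy, hli, hxj]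
          · simp [hy, hli, hlj, hrest l hli hlj]
      cases hxi : x i
      · right; rw [hx, hxi]
      · left; rw [hx, hxi]
    · rintro (rfl | rfl) <;>
        exact ⟨hyj _, fun l hli hlj => by simp [hy, hli, hlj]⟩
  have hne : y true ≠ y false := by
    intro hc
    have := congrFun hc i
    simp [hy] at this
  have hsum : ∀ f : (Fin n → Bool) → ℝ,
      (∑ x : Fin n → Bool, if (x j = b ∧ ∀ l, l ≠ i → l ≠ j → x l = z l) then f x else 0)
        = f (y true) + f (y false) := by
    intro f
    rw [← Finset.sum_filter]
    have hfil : Finset.univ.filter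
          (fun x : Fin n → Bool => x j = b ∧ ∀ l, l ≠ i → l ≠ j → x l = z l)
        = {y true, y false} := by
      ext x
      simp only [Finset.mem_filter, Finset.mem_univ, true_and, Finset.mem_insert,
        Finset.mem_singleton]
      exact hmem x
    rw [hfil, Finset.sum_pair hne]
  have hW : ∀ bi, isingWeight n J h (y bi)
      = Real.exp ((((1 / 2) * (∑ a ∈ univ.erase i, ∑ c ∈ univ.erase i, J a c * t a * t c)
          + ∑ a ∈ univ.erase i, h a * t a))
        + spin bi * ((∑ c, J i c * t c) + h i)) := by
    intro bi
    unfold isingWeight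
    congr 1
    simp only [hspin bi]
    exact exponent_update n J h hsymm hdiag i t (spin bi)
  have hyi_t : y true i = true := by simp [hy]
  have hyi_f : y false i = false := by simp [hy]
  unfold condExpSpin
  rw [hsum, hsum, hW true, hW false, hyi_t, hyi_f]
  set C := (1 / 2) * (∑ a ∈ univ.erase i, ∑ c ∈ univ.erase i, J a c * t a * t c)
      + ∑ a ∈ univ.erase i, h a * t a
  set M := (∑ c, J i c * t c) + h i with hM
  have hst : spin true = 1 := by simp [spin]
  have hsf : spin false = -1 := by simp [spin]
  rw [hst, hsf, show C + 1 * M = C + M by ring, show C + (-1) * M = C - M by ring,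
    show (1:ℝ) * Real.exp (C + M) + (-1) * Real.exp (C - M)
      = Real.exp (C + M) - Real.exp (C - M) by ring]
  exact exp_ratio_tanh C M

/-- In an `(α,β)`-nondegenerate Ising model, flipping a neighbor `j` changes the
conditional expectation of `X_i` by at least `2α(1 - tanh²(β))`, for any fixing of the
remaining spins. -/
theorem tanh_sensitivity (n : ℕ) (J : Fin n → Fin n → ℝ) (h : Fin n → ℝ) (α β : ℝ)
    (hsymm : ∀ a b, J a b = J b a) (hdiag : ∀ a, J a a = 0)
    (hα : ∀ a b, J a b ≠ 0 → α < |J a b|)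
    (hβ : ∀ a, (∑ b, |J a b|) + |h a| ≤ β)
    (i j : Fin n) (hij : i ≠ j) (hneighbor : J i j ≠ 0)
    (z : Fin n → Bool) :
    |condExpSpin n J h i j true z - condExpSpin n J h i j false z| ≥
      2 * α * (1 - Real.tanh β ^ 2) := by
  classical
  have hcond : ∀ b, condExpSpin n J h i j b z
      = Real.tanh ((∑ c, J i c * spin (if c = j then b else z c)) + h i) :=
    fun b => condExpSpin_eq_tanh n J h hsymm hdiag i j hij b z
  set Mt := (∑ c, J i c * spin (if c = j then true else z c)) + h i with hMt
  set Mf := (∑ c, J i c * spin (if c = j then false else z c)) + h i with hMf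
  have hdiff : Mt - Mf = 2 * J i j := by
    rw [hMt, hMf]
    have h1 : (∑ c, J i c * spin (if c = j then true else z c))
         - (∑ c, J i c * spin (if c = j then false else z c))
         = ∑ c, (J i c * spin (if c = j then true else z c)
                - J i c * spin (if c = j then false else z c)) :=
      (Finset.sum_sub_distrib _ _).symm
    have h2 : (∑ c, (J i c * spin (if c = j then true else z c)
                - J i c * spin (if c = j then false else z c))) = 2 * J i j := by
      rw [Finset.sum_eq_single j]
      · simp [spin]; ring
      · intro c _ hc; simp [hc]
      · intro hc; exact absurd (mem_univ j) hc
    linarith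
  have hMb : ∀ (b : Bool), |(∑ c, J i c * spin (if c = j then b else z c)) + h i| ≤ β := by
    intro b
    have h1 : |∑ c, J i c * spin (if c = j then b else z c)| ≤ ∑ c, |J i c| := by
      refine le_trans (Finset.abs_sum_le_sum_abs _ _) ?_
      refine Finset.sum_le_sum fun c _ => ?_
      rw [abs_mul, abs_spin, mul_one]
    calc |(∑ c, J i c * spin (if c = j then b else z c)) + h i|
        ≤ |∑ c, J i c * spin (if c = j then b else z c)| + |h i| := abs_add_le _ _
      _ ≤ (∑ c, |J i c|) + |h i| := by linarith
      _ ≤ β := hβ i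
  have hMtβ : |Mt| ≤ β := by rw [hMt]; exact hMb true
  have hMfβ : |Mf| ≤ β := by rw [hMf]; exact hMb false
  have hpos : 0 ≤ 1 - Real.tanh β ^ 2 := by
    rw [one_sub_tanh_sq]; positivity
  rw [hcond true, hcond false, ← hMt, ← hMf]
  rcases le_or_gt α 0 with hα0 | hα0
  · have hle : 2 * α * (1 - Real.tanh β ^ 2) ≤ 0 := by nlinarith
    exact le_trans hle (abs_nonneg _)
  · have hJ := hα i j hneighbor
    rcases lt_or_gt_of_ne hneighbor with hJneg | hJpos
    · have habs : |J i j| = -J i j := abs_of_neg hJneg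
      have hle : Mt ≤ Mf := by linarith
      have key := tanh_diff_lower hMtβ hMfβ hle
      have h2 : 2 * α ≤ Mf - Mt := by linarith
      have h3 : 2 * α * (1 - Real.tanh β ^ 2) ≤ (Mf - Mt) * (1 - Real.tanh β ^ 2) :=
        mul_le_mul_of_nonneg_right h2 hpos
      have h4 : Real.tanh Mf - Real.tanh Mt ≤ |Real.tanh Mt - Real.tanh Mf| := by
        rw [abs_sub_comm]; exact le_abs_self _
      linarith
    · have habs : |J i j| = J i j := abs_of_pos hJpos
      have hle : Mf ≤ Mt := by linarith
      have key := tanh_diff_lower hMfβ hMtβ hle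
      have h2 : 2 * α ≤ Mt - Mf := by linarith
      have h3 : 2 * α * (1 - Real.tanh β ^ 2) ≤ (Mt - Mf) * (1 - Real.tanh β ^ 2) :=
        mul_le_mul_of_nonneg_right h2 hpos
      have h4 : Real.tanh Mt - Real.tanh Mf ≤ |Real.tanh Mt - Real.tanh Mf| :=
        le_abs_self _
      linarith
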